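/- Let g(z) ∈ ℂ[t][z] be a polynomial in z whose coefficients are polynomials in t, monic in z of degree s ≥ 2 with zero coefficient of z^(s-1), and let D ≥ 1 be the maximum t-degree of the coefficients of g. Then for all but finitely many c ∈ ℂ, the t-degree of the e-fold iterate g^e evaluated at c equals D·s^(e-1). -/

import Mathlib

open Polynomial

/-- `polyIter p n` is the `n`-fold composition `p ∘ p ∘ ⋯ ∘ p`. -/
noncomputable def polyIter {R : Type*} [CommSemiring R] (p : Polynomial R) : ℕ → Polynomial R
  | 0 => X
  | n + 1 => p.comp (polyIter p n)

private lemma step_lemma (s D : ℕ) (hs : 2 ≤ s) (hD : 1 ≤ D)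
    (g : Polynomial (Polynomial ℂ)) (hg : g.Monic) (hgdeg : g.natDegree = s)
    (hgnf : g.coeff (s - 1) = 0)
    (hDmax : ∀ i, (g.coeff i).natDegree ≤ D)
    (q : Polynomial ℂ) (N : ℕ) (hDN : D ≤ N) (hN : 1 ≤ N) (hq : q.natDegree = N) :
    (g.eval q).natDegree = s * N := by
  set r : Polynomial (Polynomial ℂ) := g - X ^ s with hr
  have hgX : g = X ^ s + r := by ring
  have hrc : ∀ i, s - 1 ≤ i → r.coeff i = 0 := by
    intro i hi
    rcases lt_trichotomy i s with h | h | h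
    · have : i = s - 1 := by omega
      simp only [hr, this, coeff_sub, hgnf, coeff_X_pow, if_neg (by omega : ¬ s - 1 = s),
        sub_zero, neg_zero, zero_sub]
    · subst h
      simp [hr, coeff_X_pow, ← hgdeg, hg.coeff_natDegree]
    · simp [hr, coeff_X_pow, if_neg (by omega : ¬ i = s),
        coeff_eq_zero_of_natDegree_lt (by omega : g.natDegree < i)]
  have hrdeg : r.natDegree ≤ s := by
    have := natDegree_sub_le g (X ^ s)
    simpa [hgdeg] using this
  have hrev : (r.eval q).natDegree ≤ D + (s - 2) * N := by
    rw [eval_eq_sum_range' (Nat.lt_succ_of_le hrdeg)]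
    apply natDegree_sum_le_of_forall_le
    intro i hi
    rcases le_or_gt (s - 1) i with h | h
    · simp [hrc i h]
    · calc ((r.coeff i) * q ^ i).natDegree ≤ (r.coeff i).natDegree + (q ^ i).natDegree :=
            natDegree_mul_le
      _ ≤ D + (s - 2) * N := by
          apply add_le_add
          · have : r.coeff i = g.coeff i := by
              simp [hr, coeff_X_pow, if_neg (by omega : ¬ i = s)]
            rw [this]; exact hDmax i
          · calc (q ^ i).natDegree ≤ i * q.natDegree := natDegree_pow_le
              _ ≤ (s - 2) * N := by rw [hq]; exact Nat.mul_le_mul_right _ (by omega)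
  have hqs : (q ^ s).natDegree = s * N := by
    rw [natDegree_pow, hq]
  have hlt : (r.eval q).natDegree < (q ^ s).natDegree := by
    rw [hqs]
    calc (r.eval q).natDegree ≤ D + (s - 2) * N := hrev
      _ < s * N := by
          obtain ⟨k, rfl⟩ : ∃ k, s = k + 2 := ⟨s - 2, by omega⟩
          have : (k + 2 - 2) = k := by omega
          rw [this]
          nlinarith
  rw [hgX]
  simp only [eval_add, eval_pow, eval_X]
  rw [natDegree_add_eq_left_of_natDegree_lt hlt, hqs]

theorem stmt4 (s D : ℕ) (hs : 2 ≤ s) (hD : 1 ≤ D)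
    (g : Polynomial (Polynomial ℂ)) (hg : g.Monic) (hgdeg : g.natDegree = s)
    (hgnf : g.coeff (s - 1) = 0)
    (hDmax : ∀ i, (g.coeff i).natDegree ≤ D) (hDattained : ∃ i, (g.coeff i).natDegree = D)
    (e : ℕ) (he : 1 ≤ e) :
    {c : ℂ | ((polyIter g e).eval (C c)).natDegree ≠ D * s ^ (e - 1)}.Finite := by
  classical
  -- the polynomial of leading (t-degree D) coefficients
  set P : Polynomial ℂ := ∑ i ∈ Finset.range (s + 1), C ((g.coeff i).coeff D) * X ^ i with hP
  have hPcoeff : ∀ i, i < s + 1 → P.coeff i = (g.coeff i).coeff D := by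
    intro i hi
    rw [hP, finset_sum_coeff]
    rw [Finset.sum_eq_single i]
    · simp
    · intro j hj hne
      simp [coeff_C_mul, coeff_X_pow, if_neg (Ne.symm hne)]
    · intro h
      exact absurd (Finset.mem_range.mpr hi) h
  have hPne : P ≠ 0 := by
    obtain ⟨i, hi⟩ := hDattained
    have hgi : g.coeff i ≠ 0 := by
      intro h
      rw [h] at hi
      simp at hi
      omega
    have his : i < s + 1 := by
      by_contra h
      have : g.natDegree < i := by omega
      rw [coeff_eq_zero_of_natDegree_lt this] at hgi
      exact hgi rfl
    intro h
    have : P.coeff i = 0 := by rw [h]; simp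
    rw [hPcoeff i his] at this
    rw [← hi] at this
    exact hgi (leadingCoeff_eq_zero.mp this)
  -- evaluation of P
  have hPeval : ∀ c : ℂ, P.eval c = ∑ i ∈ Finset.range (s + 1), (g.coeff i).coeff D * c ^ i := by
    intro c
    simp [hP, eval_finset_sum]
  -- base case: for c not a root of P, natDegree (g.eval (C c)) = D
  have hbase : ∀ c : ℂ, ¬ P.IsRoot c → (g.eval (C c)).natDegree = D := by
    intro c hc
    have hev : g.eval (C c) = ∑ i ∈ Finset.range (s + 1), g.coeff i * C c ^ i := by
      rw [eval_eq_sum_range' (by omega : g.natDegree < s + 1)]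
    have hcoeffk : ∀ k, (g.eval (C c)).coeff k
        = ∑ i ∈ Finset.range (s + 1), (g.coeff i).coeff k * c ^ i := by
      intro k
      rw [hev, finset_sum_coeff]
      congr 1
      ext i
      rw [← C_pow, coeff_mul_C]
    apply le_antisymm
    · apply natDegree_le_iff_coeff_eq_zero.mpr
      intro m hm
      rw [hcoeffk]
      apply Finset.sum_eq_zero
      intro i _
      rw [coeff_eq_zero_of_natDegree_lt (lt_of_le_of_lt (hDmax i) hm), zero_mul]
    · apply le_natDegree_of_ne_zero
      rw [hcoeffk]
      rw [← hPeval]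
      exact hc
  -- the set is contained in the roots of P
  apply Set.Finite.subset (Polynomial.finite_setOf_isRoot hPne)
  intro c hc
  simp only [Set.mem_setOf_eq] at hc ⊢
  by_contra hroot
  apply hc
  clear hc
  -- prove by induction: for all e ≥ 1, natDegree = D * s^(e-1)
  induction e with
  | zero => omega
  | succ n ih =>
    rcases Nat.eq_or_lt_of_le he with h1 | h1
    · -- n + 1 = 1, i.e. n = 0
      have hn : n = 0 := by omega
      subst hn
      show ((polyIter g 1).eval (C c)).natDegree = D * s ^ (1 - 1)
      have : polyIter g 1 = g := by
        show g.comp (polyIter g 0) = g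
        simp [polyIter]
      rw [this]
      simpa using hbase c hroot
    · have hn1 : 1 ≤ n := by omega
      have ihn := ih hn1
      have heval : (polyIter g (n + 1)).eval (C c)
          = g.eval ((polyIter g n).eval (C c)) := by
        show (g.comp (polyIter g n)).eval (C c) = _
        rw [eval_comp]
      rw [heval]
      have hNge1 : 1 ≤ D * s ^ (n - 1) := by
        have : 1 ≤ s ^ (n - 1) := Nat.one_le_pow _ _ (by omega)
        exact Nat.one_le_iff_ne_zero.mpr (by positivity)
      have hDN : D ≤ D * s ^ (n - 1) :=
        Nat.le_mul_of_pos_right D (Nat.pow_pos (by omega))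
      rw [step_lemma s D hs hD g hg hgdeg hgnf hDmax _ _ hDN hNge1 ihn]
      rw [show n + 1 - 1 = n from rfl]
      rw [show s ^ n = s ^ (n - 1) * s by rw [← pow_succ]; congr 1; omega]
      ring
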